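/- Let R be a ring with involution, G a finitely generated stably free R-module, and λ a hermitian form on G whose adjoint λ̂ : G → G* is an isomorphism. Define A_3 : G ⊗_R G → Hom_R(G*, G) by (u ⊗ v) ↦ (ξ ↦ ξ(u)·v). Then A_3 is injective on the subgroup of symmetric tensors, and the element λ̂⁻¹ viewed via A_3 corresponds to the 'diagonal' class of the form. Consequently, if two non-singular hermitian forms (G, λ) and (G', λ') are isometric via Φ, then Φ λ̂⁻¹ Φ* − λ̂'⁻¹ = 0 in Hom_R(G'*, G'). -/

import Mathlib

open TensorProduct

/-- The map `A₃ : G ⊗ G → Hom(G*, G)`, `u ⊗ v ↦ (ξ ↦ ξ(u) • v)`. -/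
noncomputable def A3 (R G : Type*) [CommRing R] [AddCommGroup G] [Module R G] :
    G ⊗[R] G →ₗ[R] (Module.Dual R G →ₗ[R] G) :=
  TensorProduct.lift (LinearMap.mk₂ R
    (fun u v => (Module.Dual.eval R G u).smulRight v)
    (fun u u' v => by ext ξ; simp [add_smul]
    )
    (fun r u v => by ext ξ; simp [mul_smul]
    )
    (fun u v v' => by ext ξ; simp [smul_add]
    )
    (fun r u v => by
      ext ξ
      simp only [LinearMap.smulRight_apply, LinearMap.smul_apply, Module.Dual.eval_apply]
      exact smul_comm _ _ _))

lemma A3_tmul {R G : Type*} [CommRing R] [AddCommGroup G] [Module R G]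
    (u v : G) (ξ : Module.Dual R G) : A3 R G (u ⊗ₜ[R] v) ξ = ξ u • v := by
  simp [A3]

/-- Let `G` be a finitely generated stably free module over a ring with involution and
`lam` a hermitian form on `G` whose adjoint `ê : G ≃ G*` is an isomorphism.  Then `A₃`
is injective on symmetric tensors, `ê⁻¹` is in the image under `A₃` of a symmetric
tensor (the "diagonal class" of the form), and consequently if `(G, lam)` and
`(G', lam')` are non-singular hermitian forms which are isometric via `Φ`, then
`Φ ∘ ê⁻¹ ∘ Φ* − ê'⁻¹ = 0` in `Hom(G'*, G')`. -/
theorem stmt12 {R : Type*} [CommRing R] [StarRing R] {G G' : Type*}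
    [AddCommGroup G] [Module R G] [AddCommGroup G'] [Module R G']
    (hfg : Module.Finite R G)
    (hsf : ∃ n m : ℕ, Nonempty ((G × (Fin n → R)) ≃ₗ[R] (Fin m → R)))
    (lam : G → G → R) (lam' : G' → G' → R)
    (hherm : ∀ x y : G, lam y x = star (lam x y))
    (hherm' : ∀ x y : G', lam' y x = star (lam' x y))
    (e : G ≃ₗ[R] Module.Dual R G) (he : ∀ x y : G, e y x = lam x y)
    (e' : G' ≃ₗ[R] Module.Dual R G') (he' : ∀ x y : G', e' y x = lam' x y)
    (Φ : G ≃ₗ[R] G') (hiso : ∀ x y : G, lam' (Φ x) (Φ y) = lam x y) :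
    (∀ t₁ t₂ : G ⊗[R] G, TensorProduct.comm R G G t₁ = t₁ →
      TensorProduct.comm R G G t₂ = t₂ → A3 R G t₁ = A3 R G t₂ → t₁ = t₂) ∧
    (∃ t : G ⊗[R] G, TensorProduct.comm R G G t = t ∧
      A3 R G t = (e.symm : Module.Dual R G →ₗ[R] G)) ∧
    (Φ : G →ₗ[R] G').comp ((e.symm : Module.Dual R G →ₗ[R] G).comp
        ((Φ : G →ₗ[R] G').dualMap)) = (e'.symm : Module.Dual R G' →ₗ[R] G') := by
  classical
  obtain ⟨n, m, ⟨ψ⟩⟩ := hsf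
  set q : (Fin m → R) →ₗ[R] G := (LinearMap.fst R G (Fin n → R)).comp ψ.symm.toLinearMap with hq
  set f : Fin m → Module.Dual R G :=
    fun i => (LinearMap.proj i).comp (ψ.toLinearMap.comp (LinearMap.inl R G (Fin n → R))) with hf
  set g : Fin m → G := fun i => q (Pi.single i 1) with hg
  have hdual : ∀ x : G, ∑ i, f i x • g i = x := by
    intro x
    have h1 : ∑ i, (ψ (x, 0)) i • (Pi.single i 1 : Fin m → R) = ψ (x, 0) := by
      funext j
      simp [Finset.sum_apply, Pi.single_apply]
    calc ∑ i, f i x • g i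
        = ∑ i, q ((ψ (x, 0)) i • (Pi.single i 1 : Fin m → R)) :=
          Finset.sum_congr rfl (fun i _ => by simp [hf, hg, map_smul])
      _ = q (ψ (x, 0)) := by rw [← map_sum, h1]
      _ = x := by simp [hq]
  -- A3 is injective
  have hinj : Function.Injective (A3 R G) := by
    set B : (Module.Dual R G →ₗ[R] G) →ₗ[R] G ⊗[R] G :=
      ∑ i, (TensorProduct.mk R G G (g i)).comp (LinearMap.applyₗ (f i)) with hB
    have key : B.comp (A3 R G) = LinearMap.id := by
      apply TensorProduct.ext'
      intro u v
      have h2 : B (A3 R G (u ⊗ₜ[R] v)) = ∑ i, (f i u • g i) ⊗ₜ[R] v := by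
        rw [hB]
        simp only [LinearMap.coe_sum, Finset.sum_apply, LinearMap.comp_apply,
          LinearMap.applyₗ, LinearMap.coe_mk, AddHom.coe_mk, A3_tmul,
          TensorProduct.mk_apply]
        exact Finset.sum_congr rfl (fun i _ => by rw [TensorProduct.smul_tmul]; exact congrArg _ (A3_tmul u v (f i)))
      rw [LinearMap.comp_apply, h2, ← TensorProduct.sum_tmul, hdual, LinearMap.id_apply]
    intro t₁ t₂ h
    have h3 := congrArg B h
    rwa [← LinearMap.comp_apply, key, ← LinearMap.comp_apply, key, LinearMap.id_apply,
      LinearMap.id_apply] at h3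
  refine ⟨fun t₁ t₂ _ _ h => hinj h, ?_, ?_⟩
  · -- existence of symmetric diagonal class
    set b : Fin m → G := fun i => e.symm (f i) with hb
    set t : G ⊗[R] G := ∑ i, g i ⊗ₜ[R] b i with ht
    have H1 : ∀ ξ : Module.Dual R G, ∑ i, ξ (g i) • b i = e.symm ξ := by
      intro ξ
      have h4 : ∑ i, ξ (g i) • b i = e.symm (∑ i, ξ (g i) • f i) := by
        rw [map_sum]
        exact Finset.sum_congr rfl (fun i _ => by rw [map_smul])
      rw [h4]
      congr 1
      ext x
      simp only [LinearMap.coe_sum, Finset.sum_apply, LinearMap.smul_apply, smul_eq_mul]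
      calc ∑ i, ξ (g i) * f i x = ∑ i, ξ (f i x • g i) :=
            Finset.sum_congr rfl (fun i _ => by rw [map_smul, smul_eq_mul, mul_comm])
        _ = ξ (∑ i, f i x • g i) := (map_sum ξ _ _).symm
        _ = ξ x := by rw [hdual]
    have hA3t : A3 R G t = (e.symm : Module.Dual R G →ₗ[R] G) := by
      ext ξ
      have h5 : A3 R G t ξ = ∑ i, ξ (g i) • b i := by
        rw [ht, map_sum]
        simp only [LinearMap.coe_sum, Finset.sum_apply, A3_tmul]
      rw [h5, H1]
      rfl
    have H2 : ∀ x : G, ∑ i, (e x) (b i) • g i = x := by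
      intro x
      apply e.injective
      ext y
      have lhs : (e (∑ i, (e x) (b i) • g i)) y = ∑ i, (e x) (b i) * (e (g i)) y := by
        rw [map_sum]
        simp only [map_smul, LinearMap.coe_sum, Finset.sum_apply, LinearMap.smul_apply,
          smul_eq_mul]
      rw [lhs]
      have step : ∀ i, (e x) (b i) * (e (g i)) y = star ((e y) (g i) * (e (b i)) x) := by
        intro i
        have h6 : (e x) (b i) = star ((e (b i)) x) := by
          rw [he, he, hherm]
        have h7 : (e (g i)) y = star ((e y) (g i)) := by
          rw [he, he, hherm]
        rw [h6, h7, star_mul', mul_comm]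
      calc ∑ i, (e x) (b i) * (e (g i)) y
          = star (∑ i, (e y) (g i) * (e (b i)) x) := by
            rw [star_sum]; exact Finset.sum_congr rfl (fun i _ => step i)
        _ = star ((e (∑ i, (e y) (g i) • b i)) x) := by
            congr 1
            rw [map_sum]
            simp only [map_smul, LinearMap.coe_sum, Finset.sum_apply, LinearMap.smul_apply,
              smul_eq_mul]
        _ = star ((e y) x) := by rw [H1 (e y), e.apply_symm_apply]
        _ = (e x) y := by rw [he, ← hherm, he]
    have hA3ct : A3 R G ((TensorProduct.comm R G G) t) = (e.symm : Module.Dual R G →ₗ[R] G) := by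
      ext ξ
      have hct : (TensorProduct.comm R G G) t = ∑ i, b i ⊗ₜ[R] g i := by
        rw [ht, map_sum]
        exact Finset.sum_congr rfl (fun i _ => by rw [TensorProduct.comm_tmul])
      have h8 : A3 R G ((TensorProduct.comm R G G) t) ξ = ∑ i, ξ (b i) • g i := by
        rw [hct, map_sum]
        simp only [LinearMap.coe_sum, Finset.sum_apply, A3_tmul]
      rw [h8]
      have h9 := H2 (e.symm ξ)
      rwa [e.apply_symm_apply] at h9
    exact ⟨t, hinj (hA3ct.trans hA3t.symm), hA3t⟩
  · -- naturality / isometry consequence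
    ext ξ'
    apply e'.injective
    simp only [LinearEquiv.coe_coe, LinearEquiv.apply_symm_apply]
    ext x'
    obtain ⟨x, rfl⟩ := Φ.surjective x'
    simp only [LinearMap.comp_apply, LinearMap.dualMap_apply, LinearEquiv.coe_coe]
    rw [he', hiso, ← he, e.apply_symm_apply, LinearMap.dualMap_apply]
    rfl
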